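/- Let E_1 and E_2 be i.i.d. exponential random variables with mean one, and set K̄(x) = P(E_1 E_2 > x). Then for every x ≥ 0, K̄(x) = ∫_0^∞ exp(−y) exp(−x/y) dy, and K̄(x) is asymptotically equivalent to π^{1/2} x^{1/4} exp(−2 x^{1/2}) as x → ∞, i.e. K̄(x) / (π^{1/2} x^{1/4} e^{−2√x}) → 1 as x → ∞. -/

import Mathlib

open MeasureTheory ProbabilityTheory Filter

/-- The tail probability `K̄(x) = P(E₁E₂ > x)` of the product of two independent
mean-one exponential random variables. -/
noncomputable def Kbar (x : ℝ) : ℝ :=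
  (((expMeasure 1).prod (expMeasure 1)) {p : ℝ × ℝ | x < p.1 * p.2}).toReal

section Aux

open Real Set

lemma expMeasure_Ioi_eq {t : ℝ} (ht : 0 ≤ t) :
    expMeasure 1 (Set.Ioi t) = ENNReal.ofReal (Real.exp (-t)) := by
  rw [expMeasure, gammaMeasure, withDensity_apply _ measurableSet_Ioi]
  have h1 : ∀ y ∈ Ioi t, gammaPDF 1 1 y = ENNReal.ofReal (rexp (-y)) := by
    intro y hy
    have hy0 : 0 ≤ y := le_trans ht (le_of_lt hy)
    show exponentialPDF 1 y = _
    rw [exponentialPDF_of_nonneg hy0]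
    norm_num
  rw [setLIntegral_congr_fun measurableSet_Ioi h1]
  rw [← ofReal_integral_eq_lintegral_ofReal]
  · rw [integral_exp_neg_Ioi]
  · exact (by simpa using exp_neg_integrableOn_Ioi t one_pos : IntegrableOn (fun y : ℝ => rexp (-y)) (Ioi t))
  · exact Filter.Eventually.of_forall fun y => (exp_pos _).le

lemma Kbar_eq_integral {x : ℝ} (hx : 0 ≤ x) :
    Kbar x = ∫ y in Set.Ioi (0 : ℝ), Real.exp (-y) * Real.exp (-x / y) := by
  haveI : IsProbabilityMeasure (expMeasure 1) := isProbabilityMeasure_expMeasure one_pos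
  have hS : MeasurableSet {p : ℝ × ℝ | x < p.1 * p.2} :=
    measurableSet_lt measurable_const (measurable_fst.mul measurable_snd)
  have hmeas : Measurable fun y : ℝ =>
      expMeasure 1 (Prod.mk y ⁻¹' {p : ℝ × ℝ | x < p.1 * p.2}) :=
    measurable_measure_prodMk_left hS
  have hintmeas : Measurable fun y : ℝ => rexp (-y) * rexp (-x / y) := by
    fun_prop
  have hint : IntegrableOn (fun y => rexp (-y) * rexp (-x / y)) (Ioi 0) := by
    refine Integrable.mono (g := fun y => rexp (-y)) ?_ ?_ ?_
    · exact (by simpa using exp_neg_integrableOn_Ioi 0 one_pos : IntegrableOn (fun y : ℝ => rexp (-y)) (Ioi 0))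
    · exact hintmeas.aestronglyMeasurable.restrict
    · refine (ae_restrict_iff' measurableSet_Ioi).2 (Filter.Eventually.of_forall fun y hy => ?_)
      have h1 : rexp (-x / y) ≤ 1 := by
        rw [exp_le_one_iff]
        have : 0 ≤ x / y := div_nonneg hx (le_of_lt hy)
        simp [neg_div]; linarith
      rw [Real.norm_eq_abs, Real.norm_eq_abs, abs_of_pos (by positivity), abs_of_pos (exp_pos _)]
      nlinarith [exp_pos (-y), exp_pos (-x/y)]
  unfold Kbar
  rw [Measure.prod_apply hS]
  set f : ℝ → ENNReal := fun y => expMeasure 1 (Prod.mk y ⁻¹' {p : ℝ × ℝ | x < p.1 * p.2})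
    with hf
  have hgm : Measurable (gammaPDF 1 1) := fun s hs => by
    exact (Measurable.ennreal_ofReal (measurable_gammaPDFReal 1 1)) hs
  have key : (∫⁻ y, f y ∂(expMeasure 1))
      = ENNReal.ofReal (∫ y in Ioi (0:ℝ), rexp (-y) * rexp (-x / y)) := by
    have hμ : expMeasure 1 = MeasureTheory.volume.withDensity (gammaPDF 1 1) := rfl
    rw [hμ, lintegral_withDensity_eq_lintegral_mul _ hgm hmeas]
    have hpt : ∀ y : ℝ, (gammaPDF 1 1 * f) y
        = (Ioi (0:ℝ)).indicator (fun y => ENNReal.ofReal (rexp (-y) * rexp (-x/y))) y := by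
      intro y
      simp only [hf]
      rcases lt_trichotomy y 0 with hy | hy | hy
      · rw [Pi.mul_apply, gammaPDF_of_neg hy, zero_mul,
          indicator_of_notMem (by simpa using not_lt.2 hy.le)]
      · subst hy
        have : (Prod.mk (0:ℝ) ⁻¹' {p : ℝ × ℝ | x < p.1 * p.2}) = ∅ := by
          ext z; simp; linarith
        rw [Pi.mul_apply, this]
        simp
      · rw [Pi.mul_apply, indicator_of_mem (show y ∈ Ioi 0 from hy)]
        have hpre : (Prod.mk y ⁻¹' {p : ℝ × ℝ | x < p.1 * p.2}) = Ioi (x / y) := by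
          ext z
          simp only [mem_preimage, mem_setOf_eq, mem_Ioi]
          rw [div_lt_iff₀ hy, mul_comm]
        have hpdf : gammaPDF 1 1 y = ENNReal.ofReal (rexp (-y)) := by
          show exponentialPDF 1 y = _
          rw [exponentialPDF_of_nonneg hy.le]; norm_num
        rw [hpre, expMeasure_Ioi_eq (div_nonneg hx hy.le), hpdf,
          ← ENNReal.ofReal_mul (exp_pos _).le, neg_div]
    rw [lintegral_congr hpt, lintegral_indicator measurableSet_Ioi,
      ← ofReal_integral_eq_lintegral_ofReal hint
        (Filter.Eventually.of_forall fun y => by positivity)]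
  rw [key, ENNReal.toReal_ofReal
    (setIntegral_nonneg measurableSet_Ioi fun y _ => by positivity)]

noncomputable def Jfun (c : ℝ) : ℝ :=
  ∫ v, Set.indicator (Set.Ioi (-c)) (fun v => Real.exp (-(c * v ^ 2 / (v + c)))) v

lemma sub_key {c : ℝ} (hc : 0 < c) :
    (∫ y in Set.Ioi (0 : ℝ), Real.exp (-y) * Real.exp (-c ^ 4 / y))
      = c * (Real.exp (-2 * c ^ 2) * Jfun c) := by
  set F : ℝ → ℝ := (Ioi (0:ℝ)).indicator (fun y => rexp (-y) * rexp (-c ^ 4 / y)) with hF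
  have h0 : (∫ y in Set.Ioi (0 : ℝ), rexp (-y) * rexp (-c ^ 4 / y)) = ∫ y, F y :=
    (integral_indicator measurableSet_Ioi).symm
  have hcomp : ∀ v : ℝ, F (c * (v + c))
      = rexp (-2 * c ^ 2) * (Ioi (-c)).indicator (fun v => rexp (-(c * v ^ 2 / (v + c)))) v := by
    intro v
    by_cases hv : v ∈ Ioi (-c)
    · have hvc : 0 < v + c := by have hv' : -c < v := hv; linarith
      have hy : 0 < c * (v + c) := mul_pos hc hvc
      rw [hF, indicator_of_mem (show c * (v + c) ∈ Ioi (0:ℝ) from hy), indicator_of_mem hv]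
      rw [← Real.exp_add, ← Real.exp_add]
      congr 1
      field_simp
      ring
    · have hvc : v + c ≤ 0 := by
        simp only [mem_Ioi, not_lt] at hv; linarith
      have hy : ¬ (c * (v + c) ∈ Ioi (0:ℝ)) := by
        simp only [mem_Ioi, not_lt]
        exact mul_nonpos_of_nonneg_of_nonpos hc.le hvc
      rw [hF, indicator_of_notMem hy, indicator_of_notMem hv, mul_zero]
  have h1 : (∫ v, F (c * v)) = |c⁻¹| • ∫ y, F y :=
    MeasureTheory.Measure.integral_comp_mul_left F c
  have h2 : (∫ v, F (c * (v + c))) = ∫ v, F (c * v) :=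
    integral_add_right_eq_self (fun v => F (c * v)) c
  have h3 : (∫ v, F (c * (v + c)))
      = rexp (-2 * c ^ 2) * Jfun c := by
    rw [show (fun v => F (c * (v + c)))
        = fun v => rexp (-2 * c ^ 2) * (Ioi (-c)).indicator
            (fun v => rexp (-(c * v ^ 2 / (v + c)))) v from funext hcomp]
    exact integral_const_mul _ _
  rw [h0]
  rw [← h2, h3] at h1
  rw [abs_of_pos (inv_pos.2 hc), smul_eq_mul] at h1
  field_simp at h1
  rw [← h1]
  ring_nf

lemma tendsto_Jfun : Tendsto Jfun atTop (nhds (Real.sqrt Real.pi)) := by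
  have hgauss : (∫ v : ℝ, rexp (-v ^ 2)) = Real.sqrt Real.pi := by
    simpa using integral_gaussian 1
  rw [← hgauss]
  have hbound_int : Integrable (fun v : ℝ =>
      rexp (-v ^ 2) + rexp 1 * (Ioi (0:ℝ)).indicator (fun v => rexp (-v)) v) := by
    have h1 : Integrable (fun v : ℝ => rexp (-v ^ 2)) := by
      simpa using integrable_exp_neg_mul_sq (one_pos)
    have h2 : Integrable ((Ioi (0:ℝ)).indicator (fun v => rexp (-v))) := by
      refine (IntegrableOn.integrable_indicator ?_ measurableSet_Ioi)
      simpa using exp_neg_integrableOn_Ioi 0 one_pos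
    exact h1.add (h2.const_mul _)
  refine tendsto_integral_filter_of_dominated_convergence _ ?_ ?_ hbound_int ?_
  · refine Filter.Eventually.of_forall fun c => ?_
    refine AEStronglyMeasurable.indicator ?_ measurableSet_Ioi
    exact (Measurable.aestronglyMeasurable (by fun_prop))
  · filter_upwards [eventually_ge_atTop (1:ℝ)] with c hc1
    refine Filter.Eventually.of_forall fun v => ?_
    have hind : 0 ≤ (Ioi (0:ℝ)).indicator (fun v => rexp (-v)) v :=
      indicator_nonneg (fun y _ => (exp_pos _).le) v
    by_cases hv : v ∈ Ioi (-c)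
    · have hv' : -c < v := hv
      have hvc : 0 < v + c := by linarith
      rw [indicator_of_mem hv, Real.norm_eq_abs, abs_of_pos (exp_pos _)]
      rcases le_or_gt v 0 with hvle | hvpos
      · have key : v ^ 2 ≤ c * v ^ 2 / (v + c) := by
          rw [le_div_iff₀ hvc]
          nlinarith [sq_nonneg v]
        have : rexp (-(c * v ^ 2 / (v + c))) ≤ rexp (-v ^ 2) :=
          exp_le_exp.2 (by linarith)
        nlinarith [mul_nonneg (exp_pos (1:ℝ)).le hind]
      · have key : v - 1 ≤ c * v ^ 2 / (v + c) := by
          rw [le_div_iff₀ hvc]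
          nlinarith [sq_nonneg (2 * v - 1), mul_nonneg (sub_nonneg.2 hc1) (sq_nonneg (2 * v - 1))]
        have h1 : rexp (-(c * v ^ 2 / (v + c))) ≤ rexp (1 - v) :=
          exp_le_exp.2 (by linarith)
        have h2 : rexp (1 - v) = rexp 1 * (Ioi (0:ℝ)).indicator (fun v => rexp (-v)) v := by
          rw [indicator_of_mem (show v ∈ Ioi (0:ℝ) from hvpos), ← Real.exp_add]
          ring_nf
        nlinarith [exp_pos (-v ^ 2), h1, h2.le]
    · rw [indicator_of_notMem hv]
      simp only [norm_zero]
      positivity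
  · refine Filter.Eventually.of_forall fun v => ?_
    have hev : ∀ᶠ c in atTop, (Ioi (-c)).indicator
        (fun v => rexp (-(c * v ^ 2 / (v + c)))) v = rexp (-(v ^ 2 - v ^ 3 / (v + c))) := by
      filter_upwards [eventually_ge_atTop (|v| + 1)] with c hc
      have habs : -v ≤ |v| := neg_le_abs v
      have hvc : 0 < v + c := by linarith
      have hmem : v ∈ Ioi (-c) := by
        simp only [mem_Ioi]; linarith
      rw [indicator_of_mem hmem]
      congr 1
      field_simp
      ring
    rw [tendsto_congr' hev]
    have hd : Tendsto (fun c : ℝ => v + c) atTop atTop :=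
      tendsto_atTop_add_const_left _ _ tendsto_id
    have h0 : Tendsto (fun c : ℝ => v ^ 3 / (v + c)) atTop (nhds 0) :=
      Tendsto.div_atTop tendsto_const_nhds hd
    have h1 : Tendsto (fun c : ℝ => -(v ^ 2 - v ^ 3 / (v + c))) atTop (nhds (-(v ^ 2 - 0))) :=
      ((tendsto_const_nhds.sub h0)).neg
    have := (Real.continuous_exp.tendsto _).comp h1
    simpa [Function.comp_def] using this

end Aux

/-- `K̄(x) = ∫_0^∞ e^{−y} e^{−x/y} dy` for `x ≥ 0`, and
`K̄(x) ~ π^{1/2} x^{1/4} e^{−2√x}` as `x → ∞`. -/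
theorem stmt17 :
    (∀ x : ℝ, 0 ≤ x → Kbar x = ∫ y in Set.Ioi (0 : ℝ), Real.exp (-y) * Real.exp (-x / y)) ∧
      Tendsto (fun x : ℝ =>
          Kbar x / (Real.sqrt Real.pi * x ^ ((1 : ℝ) / 4) * Real.exp (-2 * Real.sqrt x)))
        atTop (nhds 1) := by
  constructor
  · exact fun x hx => Kbar_eq_integral hx
  · have hπ : (0:ℝ) < Real.sqrt Real.pi := Real.sqrt_pos.2 Real.pi_pos
    have hcomp : Tendsto (fun x : ℝ => Jfun (x ^ ((1:ℝ)/4)) / Real.sqrt Real.pi)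
        atTop (nhds 1) := by
      have hr : Tendsto (fun x : ℝ => x ^ ((1:ℝ)/4)) atTop atTop :=
        tendsto_rpow_atTop (by norm_num)
      have := (tendsto_Jfun.comp hr).div_const (Real.sqrt Real.pi)
      rwa [div_self hπ.ne'] at this
    refine Filter.Tendsto.congr' ?_ hcomp
    filter_upwards [eventually_gt_atTop (0:ℝ)] with x hx
    set c := x ^ ((1:ℝ)/4) with hcdef
    have hc : 0 < c := Real.rpow_pos_of_pos hx _
    have hx4 : x = c ^ 4 := by
      rw [hcdef, ← Real.rpow_natCast (x ^ ((1:ℝ)/4)) 4, ← Real.rpow_mul hx.le]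
      norm_num
    have hsq : Real.sqrt x = c ^ 2 := by
      rw [Real.sqrt_eq_rpow, hcdef, sq, ← Real.rpow_add hx]
      norm_num
    have hKb : Kbar x = c * (Real.exp (-2 * c ^ 2) * Jfun c) := by
      rw [Kbar_eq_integral hx.le]
      conv_lhs => rw [hx4]
      exact sub_key hc
    rw [hKb, hsq]
    rw [eq_comm]
    field_simp
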